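/- arXiv:2203.02037 — 2 statements merged into one kernel-verified Lean document; each statement's English description precedes it below -/
import Mathlib

section
/- Let α be a nonempty cyclically reduced word and γ a nonempty word over the same alphabet. Suppose γ is a factor of α^n for some n ≥ 1 and the formal inverse γ⁻¹ is a factor of α^m for some m ≥ 1. Then 2·|γ| < |α|, where |·| denotes the length of a word. -/
/-- A word over `β` is reduced if it has no two adjacent letters `(x, b)`, `(x, ¬b)`. -/
def Reduced {β : Type*} (w : List (β × Bool)) : Prop :=
  List.Chain' (fun a b => ¬ (a.1 = b.1 ∧ b.2 = !a.2)) w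

/-- A word is cyclically reduced if it is reduced and, when nonempty, its last letter and
first letter are not of the form `(x, b)`, `(x, ¬b)`. -/
def CyclicallyReduced {β : Type*} (w : List (β × Bool)) : Prop :=
  Reduced w ∧ ∀ a ∈ w.getLast?, ∀ b ∈ w.head?, ¬ (a.1 = b.1 ∧ b.2 = !a.2)

private lemma getElem_congr_idx' {β : Type*} (l : List β) {i j : ℕ} (h : i = j)
    (hj : j < l.length) : l[i]'(h ▸ hj) = l[j] := by subst h; rfl

private lemma flatten_replicate_getElem' {β : Type*} (a : List β) (hane : a ≠ []) (n t : ℕ)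
    (ht : t < ((List.replicate n a).flatten).length) :
    ((List.replicate n a).flatten)[t] =
      a[t % a.length]'(Nat.mod_lt _ (List.length_pos_iff.mpr hane)) := by
  induction n generalizing t with
  | zero => simp at ht
  | succ n ih =>
    have hL : 0 < a.length := List.length_pos_iff.mpr hane
    have heq : (List.replicate (n+1) a).flatten = a ++ (List.replicate n a).flatten := by
      rw [List.replicate_succ, List.flatten_cons]
    have ht2 : t < (a ++ (List.replicate n a).flatten).length := heq ▸ ht
    rw [List.getElem_of_eq heq ht]
    rcases lt_or_ge t a.length with h | h
    · rw [List.getElem_append_left h]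
      exact (getElem_congr_idx' a (Nat.mod_eq_of_lt h) _).symm
    · have ht' : t - a.length < ((List.replicate n a).flatten).length := by
        simp only [List.length_append] at ht2; omega
      rw [List.getElem_append_right h, ih _ ht']
      exact getElem_congr_idx' a (by
        have := Nat.mod_eq_sub_mod h
        omega) _

private lemma factor_getElem' {β : Type*} {w u g v : List β} (h : w = u ++ g ++ v)
    {k : ℕ} (hk : k < g.length) :
    ∃ (hw : u.length + k < w.length), w[u.length + k]'hw = g[k] := by
  subst h
  have hw : u.length + k < (u ++ g ++ v).length := by simp; omega
  refine ⟨hw, ?_⟩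
  have heq : u ++ g ++ v = u ++ (g ++ v) := List.append_assoc u g v
  rw [List.getElem_of_eq heq hw, List.getElem_append_right (by omega : u.length ≤ u.length + k),
    List.getElem_append_left (by omega : u.length + k - u.length < g.length)]
  exact getElem_congr_idx' g (by omega) hk

private lemma cyclicallyReduced_step' {β : Type*} {a : List (β × Bool)}
    (ha : CyclicallyReduced a) (hane : a ≠ []) (t : ℕ) :
    ¬ ((a[t % a.length]'(Nat.mod_lt _ (List.length_pos_iff.mpr hane))).1 =
         (a[(t+1) % a.length]'(Nat.mod_lt _ (List.length_pos_iff.mpr hane))).1 ∧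
       (a[(t+1) % a.length]'(Nat.mod_lt _ (List.length_pos_iff.mpr hane))).2 =
         !(a[t % a.length]'(Nat.mod_lt _ (List.length_pos_iff.mpr hane))).2) := by
  have hL : 0 < a.length := List.length_pos_iff.mpr hane
  have hrL : t % a.length < a.length := Nat.mod_lt _ hL
  have hmod : (t+1) % a.length = (t % a.length + 1) % a.length :=
    Nat.ModEq.add_right 1 (Nat.mod_modEq t a.length).symm
  rcases Nat.lt_or_ge (t % a.length + 1) a.length with hc | hc
  · have hmod2 : (t+1) % a.length = t % a.length + 1 := by
      rw [hmod, Nat.mod_eq_of_lt hc]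
    simp only [hmod2]
    have := List.isChain_iff_getElem.mp ha.1 (t % a.length) (by omega)
    simpa using this
  · have hc' : t % a.length + 1 = a.length := by omega
    have hmod2 : (t+1) % a.length = 0 := by rw [hmod, hc', Nat.mod_self]
    simp only [hmod2]
    have h1 : a[t % a.length]'hrL = a.getLast hane := by
      rw [List.getLast_eq_getElem]
      exact getElem_congr_idx' a (by omega) _
    have h2 : a[0]'hL = a.head hane := by
      rw [List.head_eq_getElem_zero]
    rw [h1, h2]
    exact ha.2 _ (by simp [List.getLast?_eq_getLast hane]) _
      (by simp [List.head?_eq_head hane])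

/-- If a nonempty word `γ` is a factor of a power of a nonempty cyclically reduced word `a`,
and its formal inverse `γ⁻¹` is a factor of a power of `a` as well,
then `2·|γ| < |a|`. -/
theorem length_lt_half_of_factor_and_inv_factor {β : Type*} (a γ : List (β × Bool))
    (ha : CyclicallyReduced a) (hane : a ≠ []) (hγ : γ ≠ [])
    (h1 : ∃ n : ℕ, 1 ≤ n ∧ ∃ u v, (List.replicate n a).flatten = u ++ γ ++ v)
    (h2 : ∃ m : ℕ, 1 ≤ m ∧ ∃ u v,
        (List.replicate m a).flatten = u ++ FreeGroup.invRev γ ++ v) :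
    2 * γ.length < a.length := by
  by_contra hlt
  push_neg at hlt
  have hL : 0 < a.length := List.length_pos_iff.mpr hane
  have hl : 0 < γ.length := List.length_pos_iff.mpr hγ
  obtain ⟨n, -, u, v, hu⟩ := h1
  obtain ⟨m, -, u', v', hu'⟩ := h2
  set L := a.length with hLdef
  set l := γ.length with hldef
  set i := u.length with hidef
  set j := u'.length with hjdef
  -- occurrence of γ
  have occ1 : ∀ k, (hk : k < l) → γ[k] = a[(i + k) % L]'(Nat.mod_lt _ hL) := by
    intro k hk
    obtain ⟨hw, he⟩ := factor_getElem' hu hk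
    rw [← he, flatten_replicate_getElem' a hane n _ hw]
  -- occurrence of γ⁻¹
  have occ2 : ∀ k, (hk : k < l) →
      ((γ[l - 1 - k]'(by omega)).1, !(γ[l - 1 - k]'(by omega)).2)
        = a[(j + k) % L]'(Nat.mod_lt _ hL) := by
    intro k hk
    have hklen : k < (FreeGroup.invRev γ).length := by
      simpa [FreeGroup.invRev] using hk
    obtain ⟨hw, he⟩ := factor_getElem' hu' hklen
    rw [← flatten_replicate_getElem' a hane m _ hw, he]
    show _ = (FreeGroup.invRev γ)[k]'hklen
    simp only [FreeGroup.invRev]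
    rw [List.getElem_reverse, List.getElem_map]
    rw [getElem_congr_idx' γ
      (by simp [hldef] : (List.map (fun g : β × Bool => (g.1, !g.2)) γ).length - 1 - k = l - 1 - k)
      (by omega)]
  set c := i + l - 1 with hcdef
  -- the anti-symmetry relation
  have rel : ∀ k, (hk : k < l) →
      a[(j + k) % L]'(Nat.mod_lt _ hL)
        = ((a[(c - k) % L]'(Nat.mod_lt _ hL)).1, !(a[(c - k) % L]'(Nat.mod_lt _ hL)).2) := by
    intro k hk
    rw [← occ2 k hk, occ1 (l - 1 - k) (by omega)]
    have harg : i + (l - 1 - k) = c - k := by omega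
    have hidx : (i + (l - 1 - k)) % L = (c - k) % L := by rw [harg]
    rw [getElem_congr_idx' a hidx (Nat.mod_lt _ hL)]
  haveI : NeZero L := ⟨hL.ne'⟩
  set d : ZMod L := (c : ZMod L) - (j : ZMod L) with hddef
  have hm0 : d.val < L := ZMod.val_lt d
  have hjm : (j + d.val) ≡ c [MOD L] := by
    rw [← ZMod.natCast_eq_natCast_iff]
    push_cast
    rw [ZMod.natCast_val, ZMod.cast_id, hddef]
    ring
  set k := d.val / 2 with hkdef
  have hkl : k < l := by omega
  rcases Nat.mod_two_eq_zero_or_one d.val with hpar | hpar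
  · have hmeq : (j + k) ≡ (c - k) [MOD L] := by
      apply Nat.ModEq.add_right_cancel' k
      rw [show j + k + k = j + d.val by omega, show c - k + k = c by omega]
      exact hjm
    have hmeq' : (j + k) % L = (c - k) % L := hmeq
    have hgeq : a[(j+k) % L]'(Nat.mod_lt _ hL) = a[(c-k) % L]'(Nat.mod_lt _ hL) :=
      getElem_congr_idx' a hmeq' _
    have hthis := rel k hkl
    rw [hgeq] at hthis
    have h2 := congrArg Prod.snd hthis
    simp at h2
  · have hmeq : (j + k + 1) ≡ (c - k) [MOD L] := by
      apply Nat.ModEq.add_right_cancel' k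
      rw [show j + k + 1 + k = j + d.val by omega, show c - k + k = c by omega]
      exact hjm
    have hmeq' : (c - k) % L = (j + k + 1) % L := hmeq.symm
    have hgeq : a[(c-k) % L]'(Nat.mod_lt _ hL) = a[(j+k+1) % L]'(Nat.mod_lt _ hL) :=
      getElem_congr_idx' a hmeq' _
    have hrel := rel k hkl
    rw [hgeq] at hrel
    apply cyclicallyReduced_step' ha hane (j + k)
    refine ⟨?_, ?_⟩
    · rw [hrel]
    · rw [hrel]
      simp
      rfl
end

section
/- Let α be a nonempty cyclically reduced word that is primitive (not equal to the n-fold concatenation of any word for any n ≥ 2). Let c₁ be a rotation of α and let c₂ be a rotation of the formal inverse α⁻¹, and suppose the concatenation c₁ ++ c₂ is a cyclically reduced word. Then c₁ ++ c₂ is primitive. -/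
/-- A list is primitive if it is not an `n`-fold concatenation of any list with `n ≥ 2`. -/
def Primitive {γ : Type*} (w : List γ) : Prop :=
  ¬ ∃ (u : List γ) (n : ℕ), 2 ≤ n ∧ w = (List.replicate n u).flatten

namespace RotAux

variable {β : Type*} {γ : Type*}

theorem invRev_append (p q : List (β × Bool)) :
    FreeGroup.invRev (p ++ q) = FreeGroup.invRev q ++ FreeGroup.invRev p := by
  simp [FreeGroup.invRev]

theorem invRev_getElem (z : List (β × Bool)) (j : ℕ) (hj : j < z.length) :
    (FreeGroup.invRev z)[j]'(by rw [FreeGroup.invRev_length]; exact hj) =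
      ((z[z.length - 1 - j]'(by omega)).1, !(z[z.length - 1 - j]'(by omega)).2) := by
  simp [FreeGroup.invRev, List.getElem_reverse]

theorem reduced_adj {z : List (β × Bool)} (h : Reduced z) (i : ℕ) (hi : i + 1 < z.length) :
    ¬ ((z[i]'(by omega)).1 = (z[i+1]'hi).1 ∧ (z[i+1]'hi).2 = !(z[i]'(by omega)).2) := by
  have := List.isChain_iff_getElem.mp h i (by omega)
  simpa using this

theorem selfinv {z : List (β × Bool)} (hred : Reduced z) (h : FreeGroup.invRev z = z) :
    z = [] := by
  by_contra hne
  have hl : 0 < z.length := List.length_pos_iff.mpr hne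
  rcases Nat.even_or_odd z.length with ⟨e, he⟩ | ⟨e, he⟩
  · have he1 : 1 ≤ e := by omega
    have hge : e < z.length := by omega
    have this1 : z[e]'hge = ((z[z.length - 1 - e]'(by omega)).1,
        !(z[z.length - 1 - e]'(by omega)).2) :=
      (List.getElem_of_eq h.symm hge).trans (invRev_getElem z e hge)
    have hidx : z.length - 1 - e = e - 1 := by omega
    simp only [hidx] at this1
    have hadj := reduced_adj hred (e-1) (by omega)
    have h1 : e - 1 + 1 = e := by omega
    simp only [h1] at hadj
    exact hadj ⟨(congrArg Prod.fst this1).symm, by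
      have := congrArg Prod.snd this1; simp at this; rw [this]⟩
  · have hge : e < z.length := by omega
    have this1 : z[e]'hge = ((z[z.length - 1 - e]'(by omega)).1,
        !(z[z.length - 1 - e]'(by omega)).2) :=
      (List.getElem_of_eq h.symm hge).trans (invRev_getElem z e hge)
    have hidx : z.length - 1 - e = e := by omega
    simp only [hidx] at this1
    have := congrArg Prod.snd this1
    simp at this

theorem rotinv {c : List (β × Bool)} (hred : Reduced c) (hne : c ≠ [])
    (h : c.IsRotated (FreeGroup.invRev c)) : False := by
  obtain ⟨k, hk⟩ := h
  rw [← List.rotate_mod] at hk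
  have hlt : k % c.length ≤ c.length := (Nat.mod_lt _ (List.length_pos_iff.mpr hne)).le
  rw [List.rotate_eq_drop_append_take hlt] at hk
  set x := c.take (k % c.length) with hx
  set y := c.drop (k % c.length) with hy
  have hc : c = x ++ y := (List.take_append_drop _ c).symm
  have hk2 : y ++ x = FreeGroup.invRev y ++ FreeGroup.invRev x := by
    rw [hk, hc, invRev_append]
  obtain ⟨h1, h2⟩ := List.append_inj hk2 (by rw [FreeGroup.invRev_length])
  rw [hc] at hred
  have hry : Reduced y := (List.isChain_append.mp hred).2.1
  have hrx : Reduced x := (List.isChain_append.mp hred).1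
  have := selfinv hry h1.symm
  have := selfinv hrx h2.symm
  apply hne
  rw [hc, ‹y = []›, ‹x = []›]; rfl

theorem isRotated_invRev {x y : List (β × Bool)} (h : x.IsRotated y) :
    (FreeGroup.invRev x).IsRotated (FreeGroup.invRev y) := by
  rcases eq_or_ne x [] with rfl | hne
  · have : y = [] := (List.isRotated_nil_iff'.mp h).symm
    subst this; exact List.IsRotated.refl _
  · obtain ⟨k, hk, hrot⟩ := List.isRotated_iff_mod.mp h
    rw [List.rotate_eq_drop_append_take hk] at hrot
    rw [← hrot]
    calc FreeGroup.invRev x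
        = FreeGroup.invRev (x.take k ++ x.drop k) := by rw [List.take_append_drop]
      _ = FreeGroup.invRev (x.drop k) ++ FreeGroup.invRev (x.take k) := invRev_append _ _
      _ ~r FreeGroup.invRev (x.take k) ++ FreeGroup.invRev (x.drop k) := List.isRotated_append
      _ = FreeGroup.invRev (x.drop k ++ x.take k) := (invRev_append _ _).symm

theorem length_flatten_replicate (u : List γ) (n : ℕ) :
    ((List.replicate n u).flatten).length = n * u.length := by
  simp [Nat.mul_comm]

theorem flatten_replicate_getElem (u : List γ) (hm : 0 < u.length) :
    ∀ (n i : ℕ) (h : i < ((List.replicate n u).flatten).length),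
      ((List.replicate n u).flatten)[i]'h = u[i % u.length]'(Nat.mod_lt i hm) := by
  intro n
  induction n with
  | zero => intro i h; simp at h
  | succ n ih =>
    intro i h
    have hfl : (List.replicate (n+1) u).flatten = u ++ (List.replicate n u).flatten := by
      rw [show List.replicate (n+1) u = u :: List.replicate n u from rfl, List.flatten_cons]
    rcases lt_or_ge i u.length with hi | hi
    · have : ((List.replicate (n+1) u).flatten)[i]'h = u[i]'hi := by
        rw [List.getElem_of_eq hfl h, List.getElem_append_left hi]
      rw [this]
      simp only [Nat.mod_eq_of_lt hi]
    · have hlen : i - u.length < ((List.replicate n u).flatten).length := by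
        rw [length_flatten_replicate] at h ⊢
        have : (n+1) * u.length = n * u.length + u.length := by ring
        omega
      have : ((List.replicate (n+1) u).flatten)[i]'h =
          ((List.replicate n u).flatten)[i - u.length]'hlen := by
        rw [List.getElem_of_eq hfl h, List.getElem_append_right hi]
      rw [this, ih (i - u.length) hlen]
      have : (i - u.length) % u.length = i % u.length := (Nat.mod_eq_sub_mod hi).symm
      simp only [this]

/-- the cyclic letter function of `u` -/
def gfun (u : List γ) (hm : 0 < u.length) (x : ℕ) : γ :=
  u[x % u.length]'(Nat.mod_lt x hm)

theorem gfun_congr (u : List γ) (hm : 0 < u.length) {x y : ℕ}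
    (h : x % u.length = y % u.length) : gfun u hm x = gfun u hm y := by
  simp only [gfun, h]

theorem gfun_adj (u : List (β × Bool)) (hm : 0 < u.length) (hred2 : Reduced (u ++ u)) (i : ℕ) :
    ¬ ((gfun u hm i).1 = (gfun u hm (i+1)).1 ∧ (gfun u hm (i+1)).2 = !(gfun u hm i).2) := by
  have hi' : i % u.length < u.length := Nat.mod_lt i hm
  have hmod : (i + 1) % u.length = (i % u.length + 1) % u.length :=
    (Nat.mod_modEq i u.length).symm.add_right 1
  have h1 : gfun u hm i = (u ++ u)[i % u.length]'(by rw [List.length_append]; omega) := by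
    rw [List.getElem_append_left hi']
    rfl
  have h2 : gfun u hm (i+1) =
      (u ++ u)[i % u.length + 1]'(by rw [List.length_append]; omega) := by
    show u[(i+1) % u.length]'(Nat.mod_lt _ hm) = _
    rcases lt_or_ge (i % u.length + 1) u.length with hc | hc
    · have hmod2 : (i + 1) % u.length = i % u.length + 1 := by rw [hmod, Nat.mod_eq_of_lt hc]
      simp only [hmod2]
      rw [List.getElem_append_left hc]
    · have hceq : i % u.length + 1 = u.length := by omega
      have hmod2 : (i + 1) % u.length = 0 := by rw [hmod, hceq, Nat.mod_self]
      simp only [hmod2]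
      rw [List.getElem_append_right (by omega : u.length ≤ i % u.length + 1)]
      simp only [hceq, Nat.sub_self]
  rw [h1, h2]
  exact reduced_adj hred2 (i % u.length) (by rw [List.length_append]; omega)

theorem reflect (u : List (β × Bool)) (hm : 0 < u.length) (hred2 : Reduced (u ++ u)) (D : ℕ)
    (H : ∀ x y, x + y = D → gfun u hm x = ((gfun u hm y).1, !(gfun u hm y).2)) : False := by
  rcases Nat.even_or_odd D with ⟨e, he⟩ | ⟨e, he⟩
  · have h := H e e (by omega)
    have := congrArg Prod.snd h
    simp at this
  · have h := H e (e+1) (by omega)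
    refine gfun_adj u hm hred2 e ⟨by rw [h], ?_⟩
    have := congrArg Prod.snd h
    simp at this
    rw [this]
    simp

theorem caseA (a c₁ c₂ P : List (β × Bool)) (hred : Reduced (c₁ ++ c₂))
    (hlen12 : c₁.length = c₂.length) (hne : c₁ ≠ [])
    (heq : c₁ ++ c₂ = P ++ P)
    (h1 : a.IsRotated c₁) (h2 : (FreeGroup.invRev a).IsRotated c₂) : False := by
  have hlenP : c₁.length = P.length := by
    have := congrArg List.length heq
    simp only [List.length_append] at this
    omega
  obtain ⟨e1, e2⟩ := List.append_inj heq hlenP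
  have hc12 : c₁ = c₂ := by rw [e1, e2]
  have h3 : a.IsRotated c₂ := hc12 ▸ h1
  have h5 : c₂.IsRotated (FreeGroup.invRev c₂) := h2.symm.trans (isRotated_invRev h3)
  have hredc2 : Reduced c₂ := (List.isChain_append.mp hred).2.1
  have hnec2 : c₂ ≠ [] := hc12 ▸ hne
  exact rotinv hredc2 hnec2 h5

end RotAux

/-- If `a` is a nonempty primitive cyclically reduced word, `c₁` is a rotation of `a`,
`c₂` is a rotation of the formal inverse `a⁻¹`, and `c₁ ++ c₂` is cyclically reduced,
then `c₁ ++ c₂` is primitive. -/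
theorem rotation_concat_rotation_inv_primitive {β : Type*} (a c₁ c₂ : List (β × Bool))
    (ha : CyclicallyReduced a) (hane : a ≠ []) (hprim : Primitive a)
    (hc₁ : ∃ r s, a = r ++ s ∧ c₁ = s ++ r)
    (hc₂ : ∃ r s, FreeGroup.invRev a = r ++ s ∧ c₂ = s ++ r)
    (hcr : CyclicallyReduced (c₁ ++ c₂)) :
    Primitive (c₁ ++ c₂) := by
  rintro ⟨u, n, hn, hw⟩
  obtain ⟨hredW, -⟩ := hcr
  obtain ⟨r1, s1, har1, hc1e⟩ := hc₁
  obtain ⟨r2, s2, har2, hc2e⟩ := hc₂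
  have hrot1 : a.IsRotated c₁ := by rw [har1, hc1e]; exact List.isRotated_append
  have hrot2 : (FreeGroup.invRev a).IsRotated c₂ := by
    rw [har2, hc2e]; exact List.isRotated_append
  have hL : 0 < a.length := List.length_pos_iff.mpr hane
  have hlen1 : c₁.length = a.length := hrot1.perm.length_eq.symm
  have hlen2 : c₂.length = a.length := by
    rw [← hrot2.perm.length_eq, FreeGroup.invRev_length]
  set L := a.length with hLdef
  have hnm : n * u.length = 2 * L := by
    have := congrArg List.length hw
    rw [List.length_append, hlen1, hlen2, RotAux.length_flatten_replicate] at this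
    omega
  have hm : 0 < u.length := by
    rcases Nat.eq_zero_or_pos u.length with h0 | h
    · rw [h0] at hnm; omega
    · exact h
  have hne1 : c₁ ≠ [] := by
    intro h; rw [h] at hlen1; simp at hlen1; omega
  -- w as flatten
  have hredW' : Reduced ((List.replicate n u).flatten) := by rw [← hw]; exact hredW
  have huu : (List.replicate n u).flatten = (u ++ u) ++ (List.replicate (n-2) u).flatten := by
    conv_lhs => rw [show n = 2 + (n - 2) by omega]
    rw [List.replicate_add, List.flatten_append]
    congr 1
    simp [List.replicate]
  have hred2 : Reduced (u ++ u) := by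
    rw [huu] at hredW'
    exact (List.isChain_append.mp hredW').1
  by_cases hdvd : u.length ∣ L
  · -- the even case
    obtain ⟨h, hh⟩ := hdvd
    have hn2 : n = h + h := by
      have h2 : (h + h) * u.length = 2 * L := by rw [hh]; ring
      exact Nat.eq_of_mul_eq_mul_right hm (hnm.trans h2.symm)
    refine RotAux.caseA a c₁ c₂ ((List.replicate h u).flatten) hredW (by omega) hne1 ?_
      hrot1 hrot2
    rw [hw, hn2, List.replicate_add, List.flatten_append]
  · -- the odd case
    have hdvd2 : u.length ∣ 2 * L := ⟨n, by rw [← hnm]; ring⟩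
    have hp0 : L % u.length ≠ 0 := fun h => hdvd (Nat.dvd_of_mod_eq_zero h)
    set p := L % u.length with hpdef
    have hplt : p < u.length := Nat.mod_lt _ hm
    have hLm : L = u.length * (L / u.length) + p := (Nat.div_add_mod L u.length).symm
    have hm2 : u.length = 2 * p := by
      have h2 : u.length ∣ 2 * p := by
        have hd1 : u.length ∣ 2 * (u.length * (L / u.length)) := ⟨2 * (L / u.length), by ring⟩
        have : 2 * L = 2 * (u.length * (L / u.length)) + 2 * p := by omega
        have := Nat.dvd_sub hdvd2 hd1
        rwa [show 2 * L - 2 * (u.length * (L / u.length)) = 2 * p by omega] at this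
      obtain ⟨c, hc⟩ := h2
      match c, hc with
      | 0, hc => omega
      | 1, hc => omega
      | (c+2), hc =>
        have : u.length * 2 ≤ u.length * (c + 2) := Nat.mul_le_mul_left u.length (by omega)
        omega
    have hp : 0 < p := by omega
    -- obtain the rotation distance d
    have hrotinv2 : a.IsRotated (FreeGroup.invRev c₂) := by
      have := RotAux.isRotated_invRev hrot2
      rwa [FreeGroup.invRev_invRev] at this
    obtain ⟨d0, hd0⟩ := hrot1.symm.trans hrotinv2
    have hd0' : c₁.rotate (d0 % L) = FreeGroup.invRev c₂ := by
      rw [← hlen1, List.rotate_mod]; exact hd0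
    set d := d0 % L with hddef
    have hdL : d < L := Nat.mod_lt _ (by omega)
    -- letter functions
    set g := RotAux.gfun u hm with hgdef
    have hWg : ∀ (i : ℕ) (h : i < 2 * L),
        ((List.replicate n u).flatten)[i]'(by rw [RotAux.length_flatten_replicate]; omega) =
          g i := fun i h => RotAux.flatten_replicate_getElem u hm n i _
    have hc1g : ∀ (i : ℕ) (h : i < L), c₁[i]'(by omega) = g i := by
      intro i h
      have h1 : (c₁ ++ c₂)[i]'(by rw [List.length_append]; omega) = c₁[i]'(by omega) :=
        List.getElem_append_left (by omega)
      rw [← h1, List.getElem_of_eq hw, hWg i (by omega)]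
    have hc2g : ∀ (i : ℕ) (h : i < L), c₂[i]'(by omega) = g (L + i) := by
      intro i h
      have h1 : (c₁ ++ c₂)[L + i]'(by rw [List.length_append]; omega) =
          c₂[L + i - c₁.length]'(by omega) :=
        List.getElem_append_right (by omega)
      have h2 : L + i - c₁.length = i := by omega
      simp only [h2] at h1
      rw [← h1, List.getElem_of_eq hw, hWg (L + i) (by omega)]
    have g2L : ∀ x : ℕ, g (x + 2 * L) = g x := by
      intro x
      refine RotAux.gfun_congr u hm ?_
      have : Nat.ModEq u.length (x + 2 * L) x := by
        have h1 : Nat.ModEq u.length (2 * L) 0 := (Nat.modEq_zero_iff_dvd).mpr hdvd2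
        have := h1.add_left x
        simpa using this
      exact this
    -- the master relation
    have Rel : ∀ (j : ℕ), j < L →
        g ((j + d) % L) = ((g (2 * L - 1 - j)).1, !(g (2 * L - 1 - j)).2) := by
      intro j hj
      have hjr : j < (c₁.rotate d).length := by rw [List.length_rotate]; omega
      have e1 := List.getElem_of_eq hd0' hjr
      rw [List.getElem_rotate] at e1
      have e2 : c₁[(j + d) % c₁.length]'(Nat.mod_lt _ (by omega)) = g ((j + d) % L) := by
        have : (j + d) % c₁.length = (j + d) % L := by rw [hlen1]
        simp only [this]
        exact hc1g _ (Nat.mod_lt _ (by omega))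
      have e3 := RotAux.invRev_getElem c₂ j (by omega)
      have e4 : c₂.length - 1 - j = L - 1 - j := by omega
      simp only [e4] at e3
      have e5 : c₂[L - 1 - j]'(by omega) = g (L + (L - 1 - j)) := hc2g _ (by omega)
      have e6 : L + (L - 1 - j) = 2 * L - 1 - j := by omega
      rw [e6] at e5
      rw [e2] at e1
      rw [e3, e5] at e1
      exact e1
    have R1 : ∀ (j : ℕ), j + d < L →
        g (j + d) = ((g (2 * L - 1 - j)).1, !(g (2 * L - 1 - j)).2) := by
      intro j hj
      have := Rel j (by omega)
      rwa [Nat.mod_eq_of_lt hj] at this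
    have R2 : ∀ (j : ℕ), L - d ≤ j → j < L →
        g (j + d + L) = ((g (2 * L - 1 - j)).1, !(g (2 * L - 1 - j)).2) := by
      intro j h1 h2
      have hrel := Rel j h2
      have hmod : (j + d) % L = j + d - L := by
        rw [Nat.mod_eq_sub_mod (by omega), Nat.mod_eq_of_lt (by omega)]
      rw [hmod] at hrel
      have : g (j + d - L) = g (j + d + L) := by
        rw [← g2L (j + d - L), show j + d - L + 2 * L = j + d + L by omega]
      rwa [this] at hrel
    by_cases hcase1 : u.length ≤ L - d
    · -- reflection, variant 1
      refine RotAux.reflect u hm hred2 (2 * L - 1 + d) ?_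
      intro x y hxy
      show g x = ((g y).1, !(g y).2)
      set j := (x + (u.length - d % u.length)) % u.length with hjdef
      have hjlt : j < u.length := Nat.mod_lt _ hm
      have hdmod : d % u.length < u.length := Nat.mod_lt _ hm
      have hmodeq : (j + d) % u.length = x % u.length := by
        have e1 : Nat.ModEq u.length j (x + (u.length - d % u.length)) := Nat.mod_modEq _ _
        have e2 : Nat.ModEq u.length (j + d) (x + (u.length - d % u.length) + d) :=
          e1.add_right d
        have e3 : Nat.ModEq u.length (x + (u.length - d % u.length) + d)
            (x + (u.length - d % u.length) + d % u.length) :=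
          Nat.ModEq.add_left _ (Nat.mod_modEq d u.length).symm
        have e45 : Nat.ModEq u.length (x + (u.length - d % u.length) + d % u.length) x := by
          rw [show x + (u.length - d % u.length) + d % u.length = x + u.length by omega]
          simpa using Nat.add_mod_right x u.length
        exact (e2.trans e3).trans e45
      have hgx : g (j + d) = g x := RotAux.gfun_congr u hm hmodeq
      have hsum : (j + d) + (2 * L - 1 - j) = 2 * L - 1 + d := by omega
      have h6 : Nat.ModEq u.length ((j + d) + (2 * L - 1 - j)) (x + y) := by
        rw [hsum, hxy]
      have hy : Nat.ModEq u.length (2 * L - 1 - j) y := Nat.ModEq.add_left_cancel hmodeq h6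
      have hgy : g (2 * L - 1 - j) = g y := RotAux.gfun_congr u hm hy
      rw [← hgx, ← hgy]
      exact R1 j (by omega)
    · by_cases hcase2 : u.length ≤ d
      · -- reflection, variant 2
        refine RotAux.reflect u hm hred2 (3 * L - 1 + d) ?_
        intro x y hxy
        show g x = ((g y).1, !(g y).2)
        set j := L - d + (x % u.length) with hjdef
        have hxm : x % u.length < u.length := Nat.mod_lt _ hm
        have hj1 : L - d ≤ j := Nat.le_add_right _ _
        have hj2 : j < L := by omega
        have hidx : j + d + L = x % u.length + 2 * L := by omega
        have hmodeq : (j + d + L) % u.length = x % u.length := by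
          rw [hidx]
          obtain ⟨c, hc⟩ := hdvd2
          rw [hc, Nat.add_mul_mod_self_left, Nat.mod_mod_of_dvd x (dvd_refl u.length)]
        have hgx : g (j + d + L) = g x := RotAux.gfun_congr u hm hmodeq
        have hsum : (j + d + L) + (2 * L - 1 - j) = 3 * L - 1 + d := by omega
        have h6 : Nat.ModEq u.length ((j + d + L) + (2 * L - 1 - j)) (x + y) := by
          rw [hsum, hxy]
        have hy : Nat.ModEq u.length (2 * L - 1 - j) y := Nat.ModEq.add_left_cancel hmodeq h6
        have hgy : g (2 * L - 1 - j) = g y := RotAux.gfun_congr u hm hy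
        rw [← hgx, ← hgy]
        exact R2 j hj1 hj2
      · -- the genuinely odd case: n = 3
        push_neg at hcase1 hcase2
        have hLeq : L = u.length + p := by
          have h3 : 2 * u.length ≤ n * u.length := Nat.mul_le_mul_right u.length hn
          have hdiv : L / u.length = 1 := by
            refine Nat.div_eq_of_lt_le (by omega) (by omega)
          rw [hdiv] at hLm
          omega
        have hL3 : L = 3 * p := by omega
        have hdp : p < d := by omega
        have hd2p : d < 2 * p := by omega
        -- the cyclic period p
        have hper : ∀ x : ℕ, x % u.length < p → g x = g (x + p) := by
          intro x hx
          set r := x % u.length with hrdef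
          have hxp : (x + p) % u.length = r + p := by
            have h1 : (x + p) % u.length = (r + p) % u.length :=
              (Nat.mod_modEq x u.length).symm.add_right p
            rw [h1, Nat.mod_eq_of_lt (by omega)]
          by_cases hcc : r + p < d
          · -- x via R1, x + p via R2
            set j₁ := r + (2 * p - d) with hj₁def
            have hj₁ : j₁ + d < L := by omega
            have e₁ : g (j₁ + d) = g x := by
              refine RotAux.gfun_congr u hm ?_
              have : j₁ + d = r + u.length := by omega
              rw [this, Nat.add_mod_right]
              exact (Nat.mod_mod_of_dvd x (dvd_refl u.length))
            have E₁ : g x = ((g (2 * L - 1 - j₁)).1, !(g (2 * L - 1 - j₁)).2) := by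
              rw [← e₁]; exact R1 j₁ hj₁
            set j₂ := L - d + ((x + p) % u.length) with hj₂def
            have hj₂1 : L - d ≤ j₂ := Nat.le_add_right _ _
            have hj₂2 : j₂ < L := by omega
            have e₂ : g (j₂ + d + L) = g (x + p) := by
              refine RotAux.gfun_congr u hm ?_
              have hidx2 : j₂ + d + L = (r + p) + 2 * L := by omega
              rw [hidx2]
              obtain ⟨c, hc⟩ := hdvd2
              rw [hc, Nat.add_mul_mod_self_left, hxp, Nat.mod_eq_of_lt (by omega)]
            have E₂ : g (x + p) = ((g (2 * L - 1 - j₂)).1, !(g (2 * L - 1 - j₂)).2) := by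
              rw [← e₂]; exact R2 j₂ hj₂1 hj₂2
            have e₃ : g (2 * L - 1 - j₁) = g (2 * L - 1 - j₂) := by
              refine RotAux.gfun_congr u hm ?_
              have : 2 * L - 1 - j₁ = (2 * L - 1 - j₂) + u.length := by omega
              rw [this, Nat.add_mod_right]
            rw [E₁, E₂, e₃]
          · -- x via R2, x + p via R1
            set j₂ := L - d + r with hj₂def
            have hj₂1 : L - d ≤ j₂ := Nat.le_add_right _ _
            have hj₂2 : j₂ < L := by omega
            have e₂ : g (j₂ + d + L) = g x := by
              refine RotAux.gfun_congr u hm ?_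
              have hidx2 : j₂ + d + L = r + 2 * L := by omega
              rw [hidx2]
              obtain ⟨c, hc⟩ := hdvd2
              rw [hc, Nat.add_mul_mod_self_left]
              exact (Nat.mod_mod_of_dvd x (dvd_refl u.length))
            have E₁ : g x = ((g (2 * L - 1 - j₂)).1, !(g (2 * L - 1 - j₂)).2) := by
              rw [← e₂]; exact R2 j₂ hj₂1 hj₂2
            set j₁ := (r + p) - d with hj₁def
            have hj₁ : j₁ + d < L := by omega
            have e₁ : g (j₁ + d) = g (x + p) := by
              refine RotAux.gfun_congr u hm ?_
              have : j₁ + d = r + p := by omega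
              rw [this, hxp]
              exact Nat.mod_eq_of_lt (show r + p < u.length by omega)
            have E₂ : g (x + p) = ((g (2 * L - 1 - j₁)).1, !(g (2 * L - 1 - j₁)).2) := by
              rw [← e₁]; exact R1 j₁ hj₁
            have e₃ : g (2 * L - 1 - j₂) = g (2 * L - 1 - j₁) := by
              refine RotAux.gfun_congr u hm ?_
              have : 2 * L - 1 - j₁ = (2 * L - 1 - j₂) + u.length := by omega
              rw [this, Nat.add_mod_right]
            rw [E₁, E₂, e₃]
        -- build half-word v
        set v := u.take p with hvdef
        have hvlen : v.length = p := by rw [List.length_take]; omega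
        have hug : ∀ (i : ℕ) (h : i < u.length), u[i]'h = g i := by
          intro i h
          show _ = u[i % u.length]'(Nat.mod_lt _ hm)
          simp only [Nat.mod_eq_of_lt h]
        have huv : u = v ++ v := by
          apply List.ext_getElem (by rw [List.length_append, hvlen]; omega)
          intro i h1 h2
          rcases lt_or_ge i p with hi | hi
          · rw [List.getElem_append_left (by omega), List.getElem_take]
          · rw [List.getElem_append_right (by rw [hvlen]; omega : v.length ≤ i)]
            have hip : i - v.length < p := by omega
            have e1 : v[i - v.length]'(by omega) = u[i - v.length]'(by omega) := by
              simp only [hvdef]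
              rw [List.getElem_take]
            rw [e1, hug (i - v.length) (by omega), hug i h1]
            have := hper (i - v.length) (by rw [Nat.mod_eq_of_lt (by omega)]; omega)
            rw [show i - v.length + p = i by omega] at this
            exact this.symm
        have hn3 : n = 3 := by
          have h3m : 3 * u.length = 2 * L := by omega
          exact Nat.eq_of_mul_eq_mul_right hm (hnm.trans h3m.symm)
        refine RotAux.caseA a c₁ c₂ (v ++ v ++ v) hredW (by omega) hne1 ?_ hrot1 hrot2
        rw [hw, hn3, huv]
        simp [List.replicate, List.append_assoc]
end
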